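/- Let q : ℕ → ℕ with q_k ≥ 1 for all k and q_k → ∞, and let X be the associated subshift of the skew product system (Z,T). Then every T-invariant ergodic Borel probability measure ν on X is supported on fixed points: ν({ x ∈ X : T x = x }) = 1. -/

import Mathlib

open MeasureTheory
open scoped ENNReal

/-- The left shift on one-sided sequences (indexed by positive integers). -/
def shiftN (y : ℕ → ℤ) : ℕ → ℤ := fun n => y (n + 1)

/-- The (invertible) shift by `m ∈ ℤ` on two-sided sequences: `(σ^m z)(n) = z(n + m)`. -/
def shiftZ (m : ℤ) (z : ℤ → ℤ) : ℤ → ℤ := fun n => z (n + m)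

/-- The skew product `T(y,z) = (σ y, σ^{y₁} z)` on `Z = {−1,0,1}^ℕ × {−1,1}^ℤ`. -/
def Tskew (p : (ℕ → ℤ) × (ℤ → ℤ)) : (ℕ → ℤ) × (ℤ → ℤ) :=
  (shiftN p.1, shiftZ (p.1 1) p.2)

open Classical in
/-- The sequence `s_{k,q} : ℕ → {0,1}` (viewed in `ℤ`), equal to `1` exactly at the
points `k³ + j·q` with `0 ≤ j ≤ ⌊((k+1)³ − k³)/q⌋ − 1`. -/
noncomputable def skq (k q : ℕ) (n : ℕ) : ℤ :=
  if ∃ j : ℕ, j + 1 ≤ ((k + 1) ^ 3 - k ^ 3) / q ∧ n = k ^ 3 + j * q then 1 else 0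

/-- `σ^{−p} x`: the sequence equal to `0` in its first `p` entries and with
`(σ^{−p}x)(n) = x(n−p)` for `n > p`. -/
def shiftDown (p : ℕ) (x : ℕ → ℤ) : ℕ → ℤ := fun n => if p < n then x (n - p) else 0

/-- The set `P` associated to `q : ℕ → ℕ`: `{−1,0,1}`-valued sequences whose
restriction to each block `[k³, (k+1)³)` is the corresponding restriction of
`σ^{−p} s_{k,q_k}` for some `0 ≤ p ≤ q_k`. -/
def setP (q : ℕ → ℕ) : Set (ℕ → ℤ) :=
  {y | (∀ n, y n = -1 ∨ y n = 0 ∨ y n = 1) ∧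
    ∀ k, 1 ≤ k → ∃ p, p ≤ q k ∧
      ∀ n, k ^ 3 ≤ n → n < (k + 1) ^ 3 → y n = shiftDown p (skq k (q k)) n}

/-- The set `{−1,1}^ℤ` of two-sided `±1`-valued sequences. -/
def setPM : Set (ℤ → ℤ) := {z | ∀ m, z m = -1 ∨ z m = 1}

/-- The subshift `X`: closure of `∪_{n ≥ 0} T^n (P × {−1,1}^ℤ)` in `Z`. -/
def setX (q : ℕ → ℕ) : Set ((ℕ → ℤ) × (ℤ → ℤ)) :=
  closure (⋃ n : ℕ, Tskew^[n] '' (setP q ×ˢ setPM))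


lemma iter_fst (n : ℕ) (x : (ℕ → ℤ) × (ℤ → ℤ)) (m : ℕ) :
    ((Tskew^[n]) x).1 m = x.1 (m + n) := by
  induction n generalizing x with
  | zero => rfl
  | succ n ih =>
    rw [Function.iterate_succ_apply, ih]
    show x.1 (m + n + 1) = _
    ring_nf

lemma ap_count (S : Finset ℕ) (a qq c M : ℕ) (hq : 1 ≤ qq)
    (hrep : ∀ i ∈ S, ∃ j, i = a + j * qq)
    (hwin : ∀ i ∈ S, M ≤ i ∧ i < M + c * qq) : S.card ≤ c := by
  rcases S.eq_empty_or_nonempty with rfl | hne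
  · simp
  · set i₀ := S.min' hne with hi₀
    have hi₀S : i₀ ∈ S := S.min'_mem hne
    obtain ⟨j₀, hj₀⟩ := hrep i₀ hi₀S
    have key : ∀ i ∈ S, (i - a) / qq ∈ Finset.Ico j₀ (j₀ + c) := by
      intro i hi
      obtain ⟨j, hj⟩ := hrep i hi
      have hle : i₀ ≤ i := S.min'_le i hi
      have hjj : j₀ ≤ j := by
        by_contra h
        push_neg at h
        have : j * qq < j₀ * qq := by
          exact Nat.mul_lt_mul_of_lt_of_le h (le_refl qq) hq
        omega
      have hlt : i < i₀ + c * qq := by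
        have h1 := (hwin i hi).2
        have h2 := (hwin i₀ hi₀S).1
        omega
      have hjc : j < j₀ + c := by
        by_contra h
        push_neg at h
        have : (j₀ + c) * qq ≤ j * qq := Nat.mul_le_mul_right _ h
        have : j₀ * qq + c * qq ≤ j * qq := by linarith [add_mul j₀ c qq]
        omega
      have : (i - a) / qq = j := by
        subst hj; simp [Nat.add_sub_cancel_left, Nat.mul_div_cancel _ hq]
      rw [this]
      simp [Finset.mem_Ico]; omega
    calc S.card ≤ (Finset.Ico j₀ (j₀ + c)).card := by
          apply Finset.card_le_card_of_injOn (fun i => (i - a) / qq) key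
          intro i hi i' hi' he
          obtain ⟨j, hj⟩ := hrep i (by simpa using hi)
          obtain ⟨j', hj'⟩ := hrep i' (by simpa using hi')
          have : j = j' := by
            have e1 : (i - a) / qq = j := by
              subst hj; simp [Nat.add_sub_cancel_left, Nat.mul_div_cancel _ hq]
            have e2 : (i' - a) / qq = j' := by
              subst hj'; simp [Nat.add_sub_cancel_left, Nat.mul_div_cancel _ hq]
            simpa [e1, e2] using he
          rw [hj, hj', this]
      _ = c := by simp

lemma nonzero_rep (q : ℕ → ℕ) (y : ℕ → ℤ) (k' p' : ℕ)
    (hblock : ∀ n, k' ^ 3 ≤ n → n < (k' + 1) ^ 3 → y n = shiftDown p' (skq k' (q k')) n)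
    (n : ℕ) (h1 : k' ^ 3 ≤ n) (h2 : n < (k' + 1) ^ 3) (hn : y n ≠ 0) :
    ∃ j, n = (k' ^ 3 + p') + j * q k' := by
  have h := hblock n h1 h2
  rw [h] at hn
  unfold shiftDown at hn
  by_cases hp : p' < n
  · rw [if_pos hp] at hn
    unfold skq at hn
    by_cases hcond : ∃ j : ℕ, j + 1 ≤ ((k' + 1) ^ 3 - k' ^ 3) / q k' ∧ n - p' = k' ^ 3 + j * q k'
    · obtain ⟨j, _, hj⟩ := hcond
      refine ⟨j, ?_⟩
      set t := j * q k'
      omega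
    · rw [if_neg hcond] at hn; exact absurd rfl hn
  · rw [if_neg hp] at hn; exact absurd rfl hn

lemma window_count (q : ℕ → ℕ) (c k₀ : ℕ) (hc : 1 ≤ c) (hck : c ≤ k₀)
    (hk : ∀ k, k₀ ≤ k → c ≤ q k) (hq1 : ∀ k, 1 ≤ q k)
    (y : ℕ → ℤ) (hy : y ∈ setP q) (M : ℕ) (hM : k₀ ^ 3 ≤ M) :
    ((Finset.range (c ^ 2)).filter (fun i => y (M + i) ≠ 0)).card ≤ 2 * c := by
  classical
  have hex : ∃ t, M < (t + 1) ^ 3 := by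
    refine ⟨M, ?_⟩
    calc M < M + 1 := by omega
      _ = (M + 1) ^ 1 := (pow_one _).symm
      _ ≤ (M + 1) ^ 3 := Nat.pow_le_pow_right (by omega) (by omega)
  set k := Nat.find hex with hkdef
  have hk1 : M < (k + 1) ^ 3 := Nat.find_spec hex
  have hk2 : k ^ 3 ≤ M := by
    rcases Nat.eq_zero_or_pos k with h0 | hpos
    · simp [h0]
    · have := Nat.find_min hex (show k - 1 < k by omega)
      push_neg at this
      have e : k - 1 + 1 = k := by omega
      rwa [e] at this
  have hkk₀ : k₀ ≤ k := by
    by_contra h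
    push_neg at h
    have : (k + 1) ^ 3 ≤ k₀ ^ 3 := Nat.pow_le_pow_left (by omega) 3
    omega
  have hck2 : c ≤ k := le_trans hck hkk₀
  have hub : M + c ^ 2 ≤ (k + 2) ^ 3 := by nlinarith
  obtain ⟨p₁, hp₁, hb₁⟩ := hy.2 k (by omega)
  obtain ⟨p₂, hp₂, hb₂⟩ := hy.2 (k + 1) (by omega)
  set T := (Finset.range (c ^ 2)).filter (fun i => y (M + i) ≠ 0) with hT
  set T1 := T.filter (fun i => M + i < (k + 1) ^ 3) with hT1
  set T2 := T.filter (fun i => ¬ (M + i < (k + 1) ^ 3)) with hT2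
  have hsplit : T1.card + T2.card = T.card :=
    Finset.card_filter_add_card_filter_not _
  have hmemT : ∀ i ∈ T, i < c ^ 2 ∧ y (M + i) ≠ 0 := by
    intro i hi
    simp only [hT, Finset.mem_filter, Finset.mem_range] at hi
    exact hi
  have hinj : Set.InjOn (fun i => M + i) ↑T1 ∧ Set.InjOn (fun i => M + i) ↑T2 :=
    ⟨fun a _ b _ h => by simpa using h, fun a _ b _ h => by simpa using h⟩
  have hc1 : T1.card ≤ c := by
    rw [← Finset.card_image_of_injOn hinj.1]
    apply ap_count _ (k ^ 3 + p₁) (q k) c M (hq1 k)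
    · intro n hn
      simp only [Finset.mem_image] at hn
      obtain ⟨i, hi, rfl⟩ := hn
      simp only [hT1, Finset.mem_filter] at hi
      exact nonzero_rep q y k p₁ hb₁ (M + i) (by omega) hi.2 (hmemT i hi.1).2
    · intro n hn
      simp only [Finset.mem_image] at hn
      obtain ⟨i, hi, rfl⟩ := hn
      simp only [hT1, Finset.mem_filter] at hi
      have hic := (hmemT i hi.1).1
      have hcq : c * c ≤ c * q k := Nat.mul_le_mul_left c (hk k hkk₀)
      constructor
      · omega
      · have : i < c ^ 2 := hic
        have : c ^ 2 = c * c := sq c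
        omega
  have hc2 : T2.card ≤ c := by
    rw [← Finset.card_image_of_injOn hinj.2]
    apply ap_count _ ((k + 1) ^ 3 + p₂) (q (k + 1)) c M (hq1 (k + 1))
    · intro n hn
      simp only [Finset.mem_image] at hn
      obtain ⟨i, hi, rfl⟩ := hn
      simp only [hT2, Finset.mem_filter] at hi
      have hic := (hmemT i hi.1).1
      have hlt : M + i < (k + 1 + 1) ^ 3 := by
        have : c ^ 2 = c * c := sq c
        have : (k + 2) ^ 3 = (k + 1 + 1) ^ 3 := by ring_nf
        omega
      exact nonzero_rep q y (k + 1) p₂ hb₂ (M + i) (by omega) hlt (hmemT i hi.1).2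
    · intro n hn
      simp only [Finset.mem_image] at hn
      obtain ⟨i, hi, rfl⟩ := hn
      simp only [hT2, Finset.mem_filter] at hi
      have hic := (hmemT i hi.1).1
      have hcq : c * c ≤ c * q (k + 1) := Nat.mul_le_mul_left c (hk (k + 1) (by omega))
      have : c ^ 2 = c * c := sq c
      omega
  omega

lemma X_subset_C (q : ℕ → ℕ) (c k₀ : ℕ) (hc : 1 ≤ c) (hck : c ≤ k₀)
    (hk : ∀ k, k₀ ≤ k → c ≤ q k) (hq1 : ∀ k, 1 ≤ q k) :
    setX q ⊆ {x : (ℕ → ℤ) × (ℤ → ℤ) |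
      ((Finset.range (c ^ 2)).filter (fun i => x.1 (k₀ ^ 3 + i) ≠ 0)).card ≤ 2 * c} := by
  classical
  apply closure_minimal
  · intro x hx
    simp only [Set.mem_iUnion, Set.mem_image] at hx
    obtain ⟨n, ⟨y, z⟩, hyz, rfl⟩ := hx
    have hy : y ∈ setP q := hyz.1
    have hcongr : ((Finset.range (c ^ 2)).filter
        (fun i => ((Tskew^[n]) (y, z)).1 (k₀ ^ 3 + i) ≠ 0)) =
        ((Finset.range (c ^ 2)).filter (fun i => y ((k₀ ^ 3 + n) + i) ≠ 0)) := by
      apply Finset.filter_congr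
      intro i _
      rw [iter_fst]
      have : k₀ ^ 3 + i + n = k₀ ^ 3 + n + i := by omega
      rw [this]
    simp only [Set.mem_setOf_eq]
    rw [hcongr]
    exact window_count q c k₀ hc hck hk hq1 y hy (k₀ ^ 3 + n) (by omega)
  · -- closedness
    have hF : Continuous (fun x : (ℕ → ℤ) × (ℤ → ℤ) =>
        (fun i : Fin (c ^ 2) => x.1 (k₀ ^ 3 + (i : ℕ)))) :=
      continuous_pi fun i => (continuous_apply _).comp continuous_fst
    have hg : Continuous (fun v : Fin (c ^ 2) → ℤ =>
        ((Finset.univ.filter (fun i : Fin (c ^ 2) => v i ≠ 0)).card)) :=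
      continuous_of_discreteTopology
    have heq : {x : (ℕ → ℤ) × (ℤ → ℤ) |
        ((Finset.range (c ^ 2)).filter (fun i => x.1 (k₀ ^ 3 + i) ≠ 0)).card ≤ 2 * c} =
        (fun x : (ℕ → ℤ) × (ℤ → ℤ) =>
          ((Finset.univ.filter (fun i : Fin (c ^ 2) =>
            x.1 (k₀ ^ 3 + (i : ℕ)) ≠ 0)).card)) ⁻¹' (Set.Iic (2 * c)) := by
      ext x
      simp only [Set.mem_setOf_eq, Set.mem_preimage, Set.mem_Iic]
      have : ((Finset.range (c ^ 2)).filter (fun i => x.1 (k₀ ^ 3 + i) ≠ 0)).card =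
          ((Finset.univ.filter (fun i : Fin (c ^ 2) => x.1 (k₀ ^ 3 + (i : ℕ)) ≠ 0)).card) := by
        rw [Finset.card_filter, Finset.card_filter]
        exact (Fin.sum_univ_eq_sum_range (fun i => if x.1 (k₀ ^ 3 + i) ≠ 0 then 1 else 0) (c ^ 2)).symm
      rw [this]
    rw [heq]
    exact IsClosed.preimage (hg.comp hF) isClosed_Iic


/-- every `T`-invariant ergodic Borel probability measure on the
subshift `X` is supported on the set of fixed points of `T`. -/
theorem stmt_18 (q : ℕ → ℕ) (hq1 : ∀ k, 1 ≤ q k)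
    (hq : Filter.Tendsto q Filter.atTop Filter.atTop)
    (ν : Measure ((ℕ → ℤ) × (ℤ → ℤ))) [IsProbabilityMeasure ν]
    (herg : Ergodic Tskew ν) (hsupp : ν (setX q) = 1) :
    ν {x : (ℕ → ℤ) × (ℤ → ℤ) | Tskew x = x} = 1 := by
  classical
  have hmp := herg.toMeasurePreserving
  set A₁ : Set ((ℕ → ℤ) × (ℤ → ℤ)) := {x | x.1 1 ≠ 0} with hA₁def
  have hA₁ : MeasurableSet A₁ := by
    have hm1 : Measurable fun x : (ℕ → ℤ) × (ℤ → ℤ) => x.1 1 :=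
      (measurable_pi_apply 1).comp measurable_fst
    exact hm1 (measurableSet_singleton (0 : ℤ)).compl
  -- key inequality
  have key : ∀ c : ℕ, 1 ≤ c → (c ^ 2 : ℝ≥0∞) * ν A₁ ≤ 2 * c := by
    intro c hc
    obtain ⟨k₁, hk₁⟩ := Filter.eventually_atTop.mp (hq.eventually_ge_atTop c)
    set k₀ := max c k₁ with hk₀def
    have hck : c ≤ k₀ := le_max_left _ _
    have hkq : ∀ k, k₀ ≤ k → c ≤ q k := fun k hk => hk₁ k (le_trans (le_max_right _ _) hk)
    set m := k₀ ^ 3 with hmdef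
    have hm : 1 ≤ m := Nat.one_le_iff_ne_zero.mpr (by positivity)
    set Ai : ℕ → Set ((ℕ → ℤ) × (ℤ → ℤ)) := fun i => (Tskew^[m - 1 + i]) ⁻¹' A₁ with hAidef
    have hAi_mem : ∀ i x, x ∈ Ai i ↔ x.1 (m + i) ≠ 0 := by
      intro i x
      simp only [hAidef, Set.mem_preimage, hA₁def, Set.mem_setOf_eq, iter_fst]
      have : 1 + (m - 1 + i) = m + i := by omega
      rw [this]
    have hAi_meas : ∀ i, MeasurableSet (Ai i) := fun i => (hmp.iterate _).measurable hA₁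
    have hAi_ν : ∀ i, ν (Ai i) = ν A₁ := fun i => (hmp.iterate _).measure_preimage hA₁.nullMeasurableSet
    have hXm : MeasurableSet (setX q) := isClosed_closure.measurableSet
    have haeX : ∀ᵐ x ∂ν, x ∈ setX q := by
      have h0 : ν (setX q)ᶜ = 0 := by
        rw [measure_compl hXm (measure_ne_top ν _), hsupp, measure_univ]
        simp
      exact ae_iff.mpr h0
    have hbound : ∀ᵐ x ∂ν,
        ∑ i ∈ Finset.range (c ^ 2), (Ai i).indicator (1 : ((ℕ → ℤ) × (ℤ → ℤ)) → ℝ≥0∞) x ≤ 2 * c := by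
      filter_upwards [haeX] with x hx
      have hcard := X_subset_C q c k₀ hc hck hkq hq1 hx
      simp only [Set.mem_setOf_eq] at hcard
      have heq : ∑ i ∈ Finset.range (c ^ 2), (Ai i).indicator (1 : ((ℕ → ℤ) × (ℤ → ℤ)) → ℝ≥0∞) x =
          (((Finset.range (c ^ 2)).filter (fun i => x.1 (k₀ ^ 3 + i) ≠ 0)).card : ℝ≥0∞) := by
        rw [Finset.card_filter]
        push_cast
        apply Finset.sum_congr rfl
        intro i _
        rw [Set.indicator_apply]
        by_cases h : x ∈ Ai i
        · rw [if_pos h, if_pos (by rw [← hAi_mem i x]; exact h)]; rfl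
        · rw [if_neg h, if_neg (by rw [← hAi_mem i x]; exact h)]
      rw [heq]
      calc (((Finset.range (c ^ 2)).filter (fun i => x.1 (k₀ ^ 3 + i) ≠ 0)).card : ℝ≥0∞)
          ≤ ((2 * c : ℕ) : ℝ≥0∞) := by exact_mod_cast Nat.cast_le.mpr hcard
        _ = 2 * c := by push_cast; ring
    calc (c ^ 2 : ℝ≥0∞) * ν A₁ = ∑ i ∈ Finset.range (c ^ 2), ν (Ai i) := by
          simp only [hAi_ν, Finset.sum_const, Finset.card_range, nsmul_eq_mul]
          push_cast; ring
      _ = ∑ i ∈ Finset.range (c ^ 2), ∫⁻ x, (Ai i).indicator (1 : ((ℕ → ℤ) × (ℤ → ℤ)) → ℝ≥0∞) x ∂ν := by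
          refine Finset.sum_congr rfl fun i _ => ?_
          rw [lintegral_indicator_one (hAi_meas i)]
      _ = ∫⁻ x, ∑ i ∈ Finset.range (c ^ 2), (Ai i).indicator (1 : ((ℕ → ℤ) × (ℤ → ℤ)) → ℝ≥0∞) x ∂ν := by
          rw [lintegral_finset_sum]
          intro i _
          exact (measurable_one.indicator (hAi_meas i))
      _ ≤ ∫⁻ _, (2 * c : ℝ≥0∞) ∂ν := lintegral_mono_ae hbound
      _ = 2 * c := by simp [lintegral_const]
  -- conclude ν A₁ = 0
  have hν0 : ν A₁ = 0 := by
    by_contra h0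
    have h1 : ν A₁ ≤ 1 := prob_le_one
    have htop : 2 / ν A₁ ≠ ⊤ := (ENNReal.div_lt_top (by norm_num) h0).ne
    obtain ⟨c, hcgt⟩ := ENNReal.exists_nat_gt htop
    set c' := max c 1 with hc'def
    have hgt : (2 : ℝ≥0∞) < c' * ν A₁ := by
      have hlt : 2 / ν A₁ < (c' : ℝ≥0∞) := lt_of_lt_of_le hcgt (by exact_mod_cast le_max_left c 1)
      rw [ENNReal.div_lt_iff (Or.inl h0) (Or.inl (h1.trans_lt ENNReal.one_lt_top).ne)] at hlt
      exact hlt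
    have hkey := key c' (le_max_right _ _)
    have hc0 : (c' : ℝ≥0∞) ≠ 0 := by
      simp [hc'def]
    have hctop : (c' : ℝ≥0∞) ≠ ⊤ := ENNReal.natCast_ne_top _
    have hstrict : (c' : ℝ≥0∞) * 2 < c' * (c' * ν A₁) :=
      (ENNReal.mul_lt_mul_iff_right hc0 hctop).mpr hgt
    have he1 : (c' ^ 2 : ℝ≥0∞) * ν A₁ = c' * (c' * ν A₁) := by ring
    have he2 : (2 : ℝ≥0∞) * c' = c' * 2 := by ring
    rw [he1, he2] at hkey
    exact absurd (lt_of_lt_of_le hstrict hkey) (lt_irrefl _)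
  -- bad sets all null
  set B : ℕ → Set ((ℕ → ℤ) × (ℤ → ℤ)) := fun n => {x | x.1 n ≠ 0} with hBdef
  have hBmeas : ∀ n, MeasurableSet (B n) := by
    intro n
    have hm1 : Measurable fun x : (ℕ → ℤ) × (ℤ → ℤ) => x.1 n :=
      (measurable_pi_apply n).comp measurable_fst
    exact hm1 (measurableSet_singleton (0 : ℤ)).compl
  have hB : ∀ n, ν (B n) = 0 := by
    intro n
    cases n with
    | zero =>
      have hpre : Tskew ⁻¹' (B 0) = A₁ := by
        ext x
        simp only [Set.mem_preimage, hBdef, Set.mem_setOf_eq, hA₁def]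
        rfl
      have := hmp.measure_preimage (hBmeas 0).nullMeasurableSet
      rw [hpre] at this
      rw [← this, hν0]
    | succ i =>
      have hpre : (Tskew^[i]) ⁻¹' A₁ = B (i + 1) := by
        ext x
        simp only [Set.mem_preimage, hBdef, Set.mem_setOf_eq, hA₁def, iter_fst]
        rw [show 1 + i = i + 1 by omega]
      rw [← hpre, (hmp.iterate i).measure_preimage hA₁.nullMeasurableSet, hν0]
  -- almost every point has zero first coordinate everywhere
  set G : Set ((ℕ → ℤ) × (ℤ → ℤ)) := {x | ∀ n, x.1 n = 0} with hGdef
  have hGsub : G ⊆ {x : (ℕ → ℤ) × (ℤ → ℤ) | Tskew x = x} := by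
    intro x hx
    have hx' : ∀ n, x.1 n = 0 := hx
    simp only [Set.mem_setOf_eq, Tskew]
    have h1 : shiftN x.1 = x.1 := by
      funext n
      rw [shiftN, hx' (n + 1), hx' n]
    have h2 : shiftZ (x.1 1) x.2 = x.2 := by
      funext n
      rw [shiftZ, hx' 1]
      simp
    rw [h1, h2]
  have hcover : (Set.univ : Set ((ℕ → ℤ) × (ℤ → ℤ))) ⊆ G ∪ ⋃ n, B n := by
    intro x _
    by_cases h : ∀ n, x.1 n = 0
    · exact Or.inl h
    · push_neg at h
      obtain ⟨n, hn⟩ := h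
      exact Or.inr (Set.mem_iUnion.mpr ⟨n, hn⟩)
  have hBU : ν (⋃ n, B n) = 0 := measure_iUnion_null hB
  have h1le : 1 ≤ ν {x : (ℕ → ℤ) × (ℤ → ℤ) | Tskew x = x} := by
    calc (1 : ℝ≥0∞) = ν Set.univ := measure_univ.symm
      _ ≤ ν (G ∪ ⋃ n, B n) := measure_mono hcover
      _ ≤ ν G + ν (⋃ n, B n) := measure_union_le _ _
      _ = ν G := by rw [hBU, add_zero]
      _ ≤ ν {x : (ℕ → ℤ) × (ℤ → ℤ) | Tskew x = x} := measure_mono hGsub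
  exact le_antisymm prob_le_one h1le
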